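/- arXiv:2311.00077 — 6 statements merged into one kernel-verified Lean document; each statement's English description precedes it below -/
import Mathlib

section
/- Let A = ⟨Q, Σ, δ⟩ be a deterministic finite automaton, S a proper non-empty subset of Q, and w a word over Σ. Then there exists a subset P ⊆ Q with |P| > |S| and P·w = S if and only if excl(w) ∩ S = ∅ and dupl(w) ∩ S ≠ ∅, where excl(w) = Q \ Q·w and dupl(w) = {p ∈ Q : p = q₁·w = q₂·w for some q₁ ≠ q₂}. -/
/-- The action of a word (list of letters) on a state, left to right. -/
def actWord {Q σ : Type*} (δ : Q → σ → Q) (q : Q) (w : List σ) : Q :=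
  w.foldl δ q

/-- Lemma 1 (expansion criterion): a word `w` expands a proper non-empty subset `S`
(i.e., `S` is the image of a strictly larger set) iff `excl(w) ∩ S = ∅` and
`dupl(w) ∩ S ≠ ∅`. -/
theorem stmt0 {Q σ : Type*} [Fintype Q] [DecidableEq Q]
    (δ : Q → σ → Q) (S : Finset Q) (hS : S.Nonempty) (hS' : S ≠ Finset.univ)
    (w : List σ) :
    (∃ P : Finset Q, S.card < P.card ∧ P.image (fun q => actWord δ q w) = S) ↔
      ((Set.range fun q => actWord δ q w)ᶜ ∩ (S : Set Q) = ∅ ∧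
        {p : Q | ∃ q₁ q₂ : Q, q₁ ≠ q₂ ∧ actWord δ q₁ w = p ∧ actWord δ q₂ w = p}
          ∩ (S : Set Q) ≠ ∅) := by
  set f : Q → Q := fun q => actWord δ q w with hf
  constructor
  · rintro ⟨P, hcard, himg⟩
    constructor
    · ext p
      simp only [Set.mem_inter_iff, Set.mem_compl_iff, Set.mem_range, Set.mem_empty_iff_false,
        iff_false, not_and, not_not, Finset.mem_coe]
      intro hnr hpS
      rw [← himg] at hpS
      obtain ⟨q, _, hq⟩ := Finset.mem_image.mp hpS
      exact hnr ⟨q, hq⟩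
    · have hmaps : ∀ q ∈ P, f q ∈ S := fun q hq => himg ▸ Finset.mem_image_of_mem f hq
      obtain ⟨x, hx, y, hy, hxy, hfxy⟩ :=
        Finset.exists_ne_map_eq_of_card_lt_of_maps_to hcard hmaps
      intro hempty
      have : f x ∈ ({p : Q | ∃ q₁ q₂ : Q, q₁ ≠ q₂ ∧ f q₁ = p ∧ f q₂ = p} ∩ (S : Set Q)) :=
        ⟨⟨x, y, hxy, rfl, hfxy.symm⟩, hmaps x hx⟩
      rw [hempty] at this
      exact this
  · rintro ⟨hexcl, hdupl⟩
    obtain ⟨p, ⟨q₁, q₂, hq, hq₁, hq₂⟩, hpS⟩ := Set.nonempty_iff_ne_empty.mpr hdupl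
    refine ⟨Finset.univ.filter (fun q => f q ∈ S), ?_, ?_⟩
    · -- first show image = S
      have himg : (Finset.univ.filter (fun q => f q ∈ S)).image f = S := by
        apply Finset.Subset.antisymm
        · intro p hp
          obtain ⟨q, hq', rfl⟩ := Finset.mem_image.mp hp
          exact (Finset.mem_filter.mp hq').2
        · intro p hp
          have : ¬ p ∈ (Set.range f)ᶜ := by
            intro h
            have : p ∈ ((Set.range f)ᶜ ∩ (S : Set Q)) := ⟨h, hp⟩
            rw [hexcl] at this; exact this
          obtain ⟨q, hq⟩ := not_not.mp (by simpa using this)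
          exact Finset.mem_image.mpr ⟨q, Finset.mem_filter.mpr ⟨Finset.mem_univ q, hq ▸ hp⟩, hq⟩
      conv_lhs => rw [← himg]
      rcases lt_or_eq_of_le (Finset.card_image_le (s := Finset.univ.filter (fun q => f q ∈ S)) (f := f)) with h | h
      · exact h
      · exfalso
        have hinj := Finset.injOn_of_card_image_eq h
        have h₁ : q₁ ∈ Finset.univ.filter (fun q => f q ∈ S) :=
          Finset.mem_filter.mpr ⟨Finset.mem_univ _, show actWord δ q₁ w ∈ S by rw [hq₁]; exact hpS⟩
        have h₂ : q₂ ∈ Finset.univ.filter (fun q => f q ∈ S) :=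
          Finset.mem_filter.mpr ⟨Finset.mem_univ _, show actWord δ q₂ w ∈ S by rw [hq₂]; exact hpS⟩
        exact hq (hinj h₁ h₂ (show actWord δ q₁ w = actWord δ q₂ w by rw [hq₁, hq₂]))
    · apply Finset.Subset.antisymm
      · intro p hp
        obtain ⟨q, hq', rfl⟩ := Finset.mem_image.mp hp
        exact (Finset.mem_filter.mp hq').2
      · intro p hp
        have : ¬ p ∈ (Set.range f)ᶜ := by
          intro h
          have : p ∈ ((Set.range f)ᶜ ∩ (S : Set Q)) := ⟨h, hp⟩
          rw [hexcl] at this; exact this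
        obtain ⟨q, hq⟩ := not_not.mp (by simpa using this)
        exact Finset.mem_image.mpr ⟨q, Finset.mem_filter.mpr ⟨Finset.mem_univ q, hq ▸ hp⟩, hq⟩
end

section
/- Let A = ⟨Q, Σ⟩ be a DFA with n states. Suppose that for every proper non-empty subset S ⊂ Q there exist a word w of length at most n and a subset P ⊆ Q with |P| > |S| and P·w = S. Then for every k with 0 < k ≤ n, every subset of Q with k states is reachable by a word of length at most n(n−k), i.e., equals Q·v for some word v with |v| ≤ n(n−k). -/
/-- Lemma 2: if in a DFA with `n` states every proper non-empty subset is
`n`-expandable, then every subset with `k > 0` states is reachable by a word of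
length at most `n * (n - k)`. -/
theorem stmt1 {Q σ : Type*} [Fintype Q] [DecidableEq Q]
    (δ : Q → σ → Q) (n : ℕ) (hn : n = Fintype.card Q)
    (hexp : ∀ S : Finset Q, S.Nonempty → S ≠ Finset.univ →
      ∃ w : List σ, w.length ≤ n ∧
        ∃ P : Finset Q, S.card < P.card ∧ P.image (fun q => actWord δ q w) = S) :
    ∀ S : Finset Q, S.Nonempty →
      ∃ v : List σ, v.length ≤ n * (n - S.card) ∧
        Finset.univ.image (fun q => actWord δ q v) = S := by
  suffices h : ∀ m : ℕ, ∀ S : Finset Q, S.Nonempty → n - S.card ≤ m →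
      ∃ v : List σ, v.length ≤ n * (n - S.card) ∧
        Finset.univ.image (fun q => actWord δ q v) = S by
    intro S hS
    exact h (n - S.card) S hS le_rfl
  intro m
  induction m with
  | zero =>
    intro S hS hm
    have hcard : S.card ≤ Fintype.card Q := S.card_le_univ
    have hSn : S.card = n := by omega
    have hSuniv : S = Finset.univ := Finset.eq_univ_of_card S (by omega)
    refine ⟨[], by simp, ?_⟩
    simp [actWord, hSuniv]
  | succ m ih =>
    intro S hS hm
    by_cases huniv : S = Finset.univ
    · refine ⟨[], by simp, ?_⟩
      simp [actWord, huniv]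
    · obtain ⟨w, hwlen, P, hPcard, hPim⟩ := hexp S hS huniv
      set T : Finset Q := Finset.univ.filter (fun q => actWord δ q w ∈ S) with hT
      have hPT : P ⊆ T := by
        intro p hp
        simp only [hT, Finset.mem_filter, Finset.mem_univ, true_and]
        rw [← hPim]
        exact Finset.mem_image_of_mem _ hp
      have hTcard : S.card < T.card := lt_of_lt_of_le hPcard (Finset.card_le_card hPT)
      have hTn : T.card ≤ n := hn ▸ T.card_le_univ
      have hSlt : S.card < Fintype.card Q := by
        rcases lt_or_eq_of_le S.card_le_univ with h | h
        · exact h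
        · exact absurd (Finset.eq_univ_of_card S h) huniv
      have hTne : T.Nonempty := Finset.card_pos.mp (by omega)
      obtain ⟨v, hvlen, hvim⟩ := ih T hTne (by omega)
      refine ⟨v ++ w, ?_, ?_⟩
      · have := hwlen
        calc (v ++ w).length = v.length + w.length := List.length_append
          _ ≤ n * (n - T.card) + n := by omega
          _ = n * (n - T.card + 1) := by ring
          _ ≤ n * (n - S.card) := Nat.mul_le_mul_left n (by omega)
      · have hcomp : ∀ q : Q, actWord δ q (v ++ w) = actWord δ (actWord δ q v) w := by
          intro q; simp [actWord, List.foldl_append]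
        have : Finset.univ.image (fun q => actWord δ q (v ++ w))
            = T.image (fun q => actWord δ q w) := by
          rw [← hvim, Finset.image_image]
          exact Finset.image_congr (fun q _ => hcomp q)
        rw [this]
        apply Finset.Subset.antisymm
        · intro x hx
          simp only [Finset.mem_image] at hx
          obtain ⟨q, hq, rfl⟩ := hx
          simp only [hT, Finset.mem_filter] at hq
          exact hq.2
        · rw [← hPim]
          exact Finset.image_subset_image hPT
end

section
/- Let A = ⟨ℤₙ, {a, b}⟩ be a standardized DFA with orbit Orb(d) = {d₀, …, d_{ℓ−1}} and orbit subgroup H₀ (the subgroup of (ℤₙ, ⊕) generated by Orb(d)). In the restricted orbit digraph R(A) — the subgraph of the Cayley digraph Cay(ℤₙ, Orb(d)) retaining only the short edges q → q ⊕ d_s with q + s < n (where d_s = d·aˢ) — two vertices lie in the same strongly connected component if and only if they lie in the same coset of H₀. In other words, the strongly connected components of R(A) have exactly the cosets of H₀ as their vertex sets. -/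
/-- Pigeonhole: a finset of `ZMod n` of cardinality at least `m` contains an
element whose value is at most `n - m`. -/
lemma stmt6_minval {n : ℕ} [NeZero n] (G : Finset (ZMod n)) (m : ℕ) (hm1 : 1 ≤ m)
    (hm : m ≤ G.card) : ∃ w ∈ G, w.val + m ≤ n := by
  by_contra h
  push_neg at h
  have hmn : m ≤ n := by
    have h1 := Finset.card_le_univ G
    have hc : Fintype.card (ZMod n) = n := ZMod.card n
    omega
  have hsub : G.image ZMod.val ⊆ Finset.Ico (n - m + 1) n := by
    intro x hx
    simp only [Finset.mem_image] at hx
    obtain ⟨w, hw, rfl⟩ := hx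
    have h1 := h w hw
    have h2 := ZMod.val_lt w
    simp only [Finset.mem_Ico]
    omega
  have hcard : (G.image ZMod.val).card = G.card :=
    Finset.card_image_of_injective _ (ZMod.val_injective n)
  have h2 := Finset.card_le_card hsub
  rw [Nat.card_Ico] at h2
  omega

/-- Proposition (restricted orbit digraph): in a standardized DFA `⟨ℤₙ, {a, b}⟩`, the
strongly connected components of the restricted orbit digraph (only short edges
`q → q ⊕ d_s` with `q + s < n` are kept) have exactly the cosets of the orbit
subgroup `H₀` as their vertex sets. -/
theorem stmt6 (n : ℕ) (hn : 2 ≤ n) (a : ZMod n → ZMod n)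
    -- standardized: the unique state excluded by `a` is 0
    (hexcl : Set.range a = {(0 : ZMod n)}ᶜ)
    -- standardized: the unique duplicated state of `a` is `d = a 0`
    (hdupl : ∀ p : ZMod n,
      (∃ q₁ q₂ : ZMod n, q₁ ≠ q₂ ∧ a q₁ = p ∧ a q₂ = p) ↔ p = a 0)
    -- `r ≠ 0` is the second preimage of `d`
    (r : ZMod n) (hr : r ≠ 0) (hra : a r = a 0)
    -- `ℓ` is the least positive integer with `d·a^(ℓ-1) = r`
    (ℓ : ℕ) (hℓ1 : 1 ≤ ℓ) (hℓr : a^[ℓ - 1] (a 0) = r)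
    (hℓmin : ∀ m : ℕ, 1 ≤ m → a^[m - 1] (a 0) = r → ℓ ≤ m)
    -- the restricted orbit digraph: short edges `q → q ⊕ d_s` with `q + s < n`
    (edge : ZMod n → ZMod n → Prop)
    (hedge : ∀ u v : ZMod n,
      edge u v ↔ ∃ s : ℕ, s < ℓ ∧ v = u + a^[s] (a 0) ∧ u.val + s < n)
    (u v : ZMod n) :
    (Relation.ReflTransGen edge u v ∧ Relation.ReflTransGen edge v u) ↔
      u - v ∈ AddSubgroup.closure {x : ZMod n | ∃ s : ℕ, s < ℓ ∧ x = a^[s] (a 0)} := by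
  haveI : NeZero n := ⟨by omega⟩
  set H := AddSubgroup.closure {x : ZMod n | ∃ s : ℕ, s < ℓ ∧ x = a^[s] (a 0)} with hH
  -- `a` never hits 0
  have ha0 : ∀ x, a x ≠ 0 := by
    intro x
    have : a x ∈ Set.range a := ⟨x, rfl⟩
    rw [hexcl] at this
    simpa using this
  -- iterates of d = a 0 are never 0
  have hds : ∀ s : ℕ, a^[s] (a 0) ≠ 0 := by
    intro s
    have : a^[s] (a 0) = a (a^[s] 0) := by
      rw [← Function.iterate_succ_apply, Function.iterate_succ_apply']
    rw [this]
    exact ha0 _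
  -- `a` is injective away from the pair {0, r}
  have hinj : ∀ x y, a x = a y → x = y ∨ (x = 0 ∧ y = r) ∨ (x = r ∧ y = 0) := by
    have hmem : ∀ x : ZMod n, (∃ y, a y = x) ↔ x ≠ 0 := by
      intro x
      constructor
      · rintro ⟨y, rfl⟩; exact ha0 y
      · intro hx
        have : x ∈ Set.range a := by rw [hexcl]; simpa using hx
        exact this
    have himg : Finset.image a Finset.univ = Finset.univ.erase (0 : ZMod n) := by
      ext x
      constructor
      · intro hx
        obtain ⟨y, -, rfl⟩ := Finset.mem_image.mp hx
        exact Finset.mem_erase.mpr ⟨ha0 y, Finset.mem_univ _⟩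
      · intro hx
        obtain ⟨y, hy⟩ := (hmem x).mpr (Finset.mem_erase.mp hx).1
        exact Finset.mem_image.mpr ⟨y, Finset.mem_univ y, hy⟩
    have hcard1 : (Finset.image a Finset.univ).card = n - 1 := by
      rw [himg, Finset.card_erase_of_mem (Finset.mem_univ _), Finset.card_univ, ZMod.card]
    have hcard2 : (Finset.univ.erase r).card = n - 1 := by
      rw [Finset.card_erase_of_mem (Finset.mem_univ _), Finset.card_univ, ZMod.card]
    have himg2 : Finset.image a (Finset.univ.erase r) = Finset.image a Finset.univ := by
      apply Finset.Subset.antisymm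
      · exact Finset.image_subset_image (Finset.erase_subset _ _)
      · intro x hx
        obtain ⟨y, -, rfl⟩ := Finset.mem_image.mp hx
        by_cases hyr : y = r
        · rw [hyr, hra]
          exact Finset.mem_image_of_mem a
            (Finset.mem_erase.mpr ⟨Ne.symm hr, Finset.mem_univ _⟩)
        · exact Finset.mem_image_of_mem a (Finset.mem_erase.mpr ⟨hyr, Finset.mem_univ _⟩)
    have hinjOn : Set.InjOn a (Finset.univ.erase r : Finset (ZMod n)) := by
      apply Finset.injOn_of_card_image_eq
      rw [himg2, hcard1, hcard2]
    intro x y hxy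
    have h0 : (0 : ZMod n) ∈ (Finset.univ.erase r : Finset (ZMod n)) :=
      Finset.mem_erase.mpr ⟨Ne.symm hr, Finset.mem_univ _⟩
    by_cases hx : x = r
    · by_cases hy : y = r
      · left; rw [hx, hy]
      · rw [hx, hra] at hxy
        have hy' : y ∈ (Finset.univ.erase r : Finset (ZMod n)) :=
          Finset.mem_erase.mpr ⟨hy, Finset.mem_univ _⟩
        right; right; exact ⟨hx, (hinjOn h0 hy' hxy).symm⟩
    · by_cases hy : y = r
      · rw [hy, hra] at hxy
        have hx' : x ∈ (Finset.univ.erase r : Finset (ZMod n)) :=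
          Finset.mem_erase.mpr ⟨hx, Finset.mem_univ _⟩
        right; left; exact ⟨hinjOn hx' h0 hxy, hy⟩
      · left
        exact hinjOn (Finset.mem_erase.mpr ⟨hx, Finset.mem_univ _⟩)
          (Finset.mem_erase.mpr ⟨hy, Finset.mem_univ _⟩) hxy
  -- the iterates d_0, ..., d_{ℓ-1} are pairwise distinct
  have hdist : ∀ i j : ℕ, i < j → j < ℓ → a^[i] (a 0) ≠ a^[j] (a 0) := by
    intro i
    induction i with
    | zero =>
      intro j hij hjl heq
      obtain ⟨j', rfl⟩ : ∃ j', j = j' + 1 := ⟨j - 1, by omega⟩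
      rw [Function.iterate_succ_apply', Function.iterate_zero_apply] at heq
      rcases hinj 0 (a^[j'] (a 0)) heq with h | ⟨_, h2⟩ | ⟨h1, _⟩
      · exact hds j' h.symm
      · have := hℓmin (j' + 1) (by omega) (by simpa using h2)
        omega
      · exact hr h1.symm
    | succ i ih =>
      intro j hij hjl heq
      obtain ⟨j', rfl⟩ : ∃ j', j = j' + 1 := ⟨j - 1, by omega⟩
      rw [Function.iterate_succ_apply', Function.iterate_succ_apply'] at heq
      rcases hinj (a^[i] (a 0)) (a^[j'] (a 0)) heq with h | ⟨h1, _⟩ | ⟨_, h2⟩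
      · exact ih j' (by omega) (by omega) h
      · exact hds i h1
      · exact hds j' h2
  -- basic closure properties of "reaching u + x from every u"
  have hTadd : ∀ x y : ZMod n,
      (∀ w, Relation.ReflTransGen edge w (w + x)) →
      (∀ w, Relation.ReflTransGen edge w (w + y)) →
      ∀ w, Relation.ReflTransGen edge w (w + (x + y)) := by
    intro x y hx hy w
    have := (hx w).trans (hy (w + x))
    rwa [add_assoc] at this
  have hTnsmul : ∀ (x : ZMod n) (k : ℕ),
      (∀ w, Relation.ReflTransGen edge w (w + x)) →
      ∀ w, Relation.ReflTransGen edge w (w + k • x) := by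
    intro x k hx
    induction k with
    | zero => intro w; simpa using Relation.ReflTransGen.refl
    | succ k ihk =>
      intro w
      have := (ihk w).trans (hx (w + k • x))
      rwa [succ_nsmul, ← add_assoc]
  have hTneg : ∀ x : ZMod n,
      (∀ w, Relation.ReflTransGen edge w (w + x)) →
      ∀ w, Relation.ReflTransGen edge w (w + (-x)) := by
    intro x hx w
    have hk := hTnsmul x (n - 1) hx w
    have hcast : ((n - 1 : ℕ) • x) = -x := by
      rw [nsmul_eq_mul, Nat.cast_sub (by omega : 1 ≤ n), ZMod.natCast_self]
      push_cast
      ring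
    rwa [hcast] at hk
  -- key lemma: for each s < ℓ, from every u one can reach u + d_s
  have key : ∀ s : ℕ, s < ℓ → ∀ w : ZMod n,
      Relation.ReflTransGen edge w (w + a^[s] (a 0)) := by
    intro s
    induction s using Nat.strong_induction_on with
    | _ s ih =>
      intro hs w
      -- reachability holds for all elements of F = {0, d_0, ..., d_{s-1}} and negatives
      have hTF : ∀ t : ℕ, t < s → ∀ w : ZMod n,
          Relation.ReflTransGen edge w (w + a^[t] (a 0)) := fun t ht => ih t ht (by omega)
      -- the finset {0, d_0, ..., d_{s-1}} has s + 1 elements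
      set F : Finset (ZMod n) :=
        insert 0 ((Finset.range s).image (fun t => a^[t] (a 0))) with hF
      have hinjF : Set.InjOn (fun t => a^[t] (a 0)) (Finset.range s : Finset ℕ) := by
        intro t1 h1 t2 h2 heq
        simp only [Finset.coe_range, Set.mem_Iio] at h1 h2
        by_contra hne
        rcases Nat.lt_or_ge t1 t2 with h | h
        · exact hdist t1 t2 h (by omega) heq
        · exact hdist t2 t1 (by omega) (by omega) heq.symm
      have hcardF : F.card = s + 1 := by
        rw [hF, Finset.card_insert_of_notMem, Finset.card_image_of_injOn hinjF,
          Finset.card_range]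
        intro h0
        simp only [Finset.mem_image, Finset.mem_range] at h0
        obtain ⟨t, _, ht⟩ := h0
        exact hds t ht
      -- the coset finset u + F
      have hcardG : (F.image (fun x => w + x)).card = s + 1 := by
        rw [Finset.card_image_of_injective _ (add_right_injective w), hcardF]
      obtain ⟨z, hzG, hzval⟩ := stmt6_minval (F.image (fun x => w + x)) (s + 1) (by omega) (le_of_eq hcardG.symm)
      obtain ⟨x, hxF, rfl⟩ := Finset.mem_image.mp hzG
      -- reachability for x and -x
      have hTx : ∀ w' : ZMod n, Relation.ReflTransGen edge w' (w' + x) := by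
        rw [hF] at hxF
        rcases Finset.mem_insert.mp hxF with h0 | hximg
        · subst h0; intro w'; simpa using Relation.ReflTransGen.refl
        · obtain ⟨t, ht, rfl⟩ := Finset.mem_image.mp hximg
          exact hTF t (Finset.mem_range.mp ht)
      -- the short edge from w + x
      have hE : edge (w + x) (w + x + a^[s] (a 0)) := by
        rw [hedge]
        exact ⟨s, hs, rfl, by omega⟩
      have h1 : Relation.ReflTransGen edge w (w + x + a^[s] (a 0)) :=
        (hTx w).trans (Relation.ReflTransGen.single hE)
      have h2 := hTneg x hTx (w + x + a^[s] (a 0))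
      have h3 := h1.trans h2
      have : w + x + a^[s] (a 0) + -x = w + a^[s] (a 0) := by ring
      rwa [this] at h3
  -- every element of H gives global reachability
  have hHreach : ∀ x : ZMod n, x ∈ H → ∀ w : ZMod n,
      Relation.ReflTransGen edge w (w + x) := by
    intro x hx
    refine AddSubgroup.closure_induction ?_ ?_ ?_ ?_ hx
    · rintro y ⟨s, hs, rfl⟩
      exact key s hs
    · intro w; simpa using Relation.ReflTransGen.refl
    · intro y z _ _ hy hz
      exact hTadd y z hy hz
    · intro y _ hy
      exact hTneg y hy
  -- forward: along edges, the difference stays in H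
  have hfw : ∀ p q : ZMod n, Relation.ReflTransGen edge p q → q - p ∈ H := by
    intro p q h
    induction h with
    | refl => simpa using AddSubgroup.zero_mem H
    | @tail b c hab hbc ih =>
      obtain ⟨s, hs, rfl, _⟩ := (hedge _ _).mp hbc
      have heq : b + a^[s] (a 0) - p = (b - p) + a^[s] (a 0) := by ring
      rw [heq]
      exact AddSubgroup.add_mem H ih (AddSubgroup.subset_closure ⟨s, hs, rfl⟩)
  constructor
  · rintro ⟨_, h2⟩
    exact hfw v u h2
  · intro hmem
    constructor
    · have := hHreach (v - u) (by
        have : v - u = -(u - v) := by ring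
        rw [this]
        exact AddSubgroup.neg_mem H hmem) u
      simpa using this
    · have := hHreach (u - v) hmem v
      simpa using this
end

section
/- Let A = ⟨ℤₙ, {a, b}⟩ be a standardized DFA with orbit subgroup H₀. Every non-empty subset S of ℤₙ that is not a union of cosets of H₀ is n-expandable: there exists a word w over {a, b} of length at most n and a subset P ⊆ ℤₙ with |P| > |S| and P·w = S. Moreover, w can be chosen of the form a^{s+1} b^q with 0 ≤ s ≤ ℓ−1, q ∈ ℤₙ, and q + s + 1 ≤ n. -/
/-- The action of a word on a state: `true` acts as the letter `a`, `false` acts as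
the letter `b : q ↦ q + 1`. -/
def actAB (n : ℕ) (a : ZMod n → ZMod n) (q : ZMod n) (w : List Bool) : ZMod n :=
  w.foldl (fun p l => if l then a p else p + 1) q

section Aux

variable {n : ℕ} (a : ZMod n → ZMod n)

lemma foldl_rep_true (k : ℕ) (p : ZMod n) :
    List.foldl (fun p l => if l then a p else p + 1) p (List.replicate k true) = a^[k] p := by
  induction k generalizing p with
  | zero => simp
  | succ k ih =>
    rw [List.replicate_succ, List.foldl_cons, Function.iterate_succ_apply]
    simpa using ih (a p)

lemma foldl_rep_false (k : ℕ) (p : ZMod n) :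
    List.foldl (fun p l => if l then a p else p + 1) p (List.replicate k false) = p + k := by
  induction k generalizing p with
  | zero => simp
  | succ k ih =>
    rw [List.replicate_succ, List.foldl_cons]
    simp only [if_neg (by simp : ¬ (false = true))]
    rw [ih]
    push_cast
    ring

lemma actAB_word (s q : ℕ) (p : ZMod n) :
    actAB n a p (List.replicate s true ++ List.replicate q false) = a^[s] p + (q : ZMod n) := by
  unfold actAB
  rw [List.foldl_append, foldl_rep_true, foldl_rep_false]

variable [NeZero n]

open Finset in
lemma card_step
    (h0 : ∀ x : ZMod n, a x ≠ 0)
    (hinj : ∀ x y : ZMod n, x ≠ 0 → y ≠ 0 → a x = a y → x = y)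
    (hsurj : ∀ y : ZMod n, y ≠ 0 → ∃ x, x ≠ 0 ∧ a x = y)
    [DecidableEq (ZMod n)] (T : Finset (ZMod n)) :
    (Finset.univ.filter (fun x => a x ∈ T)).card + (if (0:ZMod n) ∈ T then 1 else 0)
      = T.card + (if a 0 ∈ T then 1 else 0) := by
  classical
  have h1 : (Finset.univ.filter (fun x : ZMod n => x ≠ 0 ∧ a x ∈ T)).card
      = (T.filter (fun y => y ≠ 0)).card := by
    apply Finset.card_bij (fun x _ => a x)
    · intro x hx
      simp only [mem_filter, mem_univ, true_and] at hx
      simp only [mem_filter]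
      exact ⟨hx.2, h0 x⟩
    · intro x hx y hy hxy
      simp only [mem_filter, mem_univ, true_and] at hx hy
      exact hinj x y hx.1 hy.1 hxy
    · intro y hy
      simp only [mem_filter] at hy
      obtain ⟨x, hx0, hxe⟩ := hsurj y hy.2
      exact ⟨x, by simp only [mem_filter, mem_univ, true_and]; exact ⟨hx0, hxe ▸ hy.1⟩, hxe⟩
  have h2 : (Finset.univ.filter (fun x : ZMod n => a x ∈ T)).card
      = (Finset.univ.filter (fun x : ZMod n => x ≠ 0 ∧ a x ∈ T)).card
        + (if a 0 ∈ T then 1 else 0) := by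
    have hsplit : Finset.univ.filter (fun x : ZMod n => a x ∈ T)
        = (Finset.univ.filter (fun x : ZMod n => x ≠ 0 ∧ a x ∈ T))
          ∪ (Finset.univ.filter (fun x : ZMod n => x = 0 ∧ a x ∈ T)) := by
      ext x
      simp only [mem_filter, mem_univ, true_and, mem_union]
      tauto
    have hdisj : Disjoint (Finset.univ.filter (fun x : ZMod n => x ≠ 0 ∧ a x ∈ T))
        (Finset.univ.filter (fun x : ZMod n => x = 0 ∧ a x ∈ T)) := by
      rw [Finset.disjoint_left]
      intro x hx hx'
      simp only [mem_filter, mem_univ, true_and] at hx hx'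
      exact hx.1 hx'.1
    have hzero : Finset.univ.filter (fun x : ZMod n => x = 0 ∧ a x ∈ T)
        = if a 0 ∈ T then {0} else ∅ := by
      split_ifs with h
      · ext x
        simp only [mem_filter, mem_univ, true_and, mem_singleton]
        constructor
        · rintro ⟨rfl, _⟩; rfl
        · rintro rfl; exact ⟨rfl, h⟩
      · ext x
        simp only [mem_filter, mem_univ, true_and, notMem_empty, iff_false, not_and]
        rintro rfl; exact h
    rw [hsplit, Finset.card_union_of_disjoint hdisj, hzero]
    congr 1
    split_ifs <;> simp
  have h3 : T.card = (T.filter (fun y => y ≠ 0)).card + (if (0:ZMod n) ∈ T then 1 else 0) := by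
    have hzero : T.filter (fun y : ZMod n => y = 0) = if (0:ZMod n) ∈ T then {0} else ∅ := by
      split_ifs with h
      · ext x
        simp only [mem_filter, mem_singleton]
        constructor
        · rintro ⟨_, rfl⟩; rfl
        · rintro rfl; exact ⟨h, rfl⟩
      · ext x
        simp only [mem_filter, notMem_empty, iff_false, not_and]
        rintro hx rfl; exact h hx
    have := Finset.card_filter_add_card_filter_not (s := T) (p := fun y : ZMod n => y = 0)
    rw [hzero] at this
    have h4 : (T.filter (fun y : ZMod n => ¬ y = 0)).card = (T.filter (fun y : ZMod n => y ≠ 0)).card := rfl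
    split_ifs at this ⊢ <;> simp at this <;> omega
  rw [h2, h1]
  omega

open Finset in
lemma card_iter
    (h0 : ∀ x : ZMod n, a x ≠ 0)
    (hinj : ∀ x y : ZMod n, x ≠ 0 → y ≠ 0 → a x = a y → x = y)
    (hsurj : ∀ y : ZMod n, y ≠ 0 → ∃ x, x ≠ 0 ∧ a x = y)
    [DecidableEq (ZMod n)] :
    ∀ (k : ℕ) (T : Finset (ZMod n)),
    (Finset.univ.filter (fun x => a^[k+1] x ∈ T)).card + (if (0:ZMod n) ∈ T then 1 else 0)
      = T.card + (if a^[k] (a 0) ∈ T then 1 else 0) := by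
  intro k
  induction k with
  | zero =>
    intro T
    exact card_step a h0 hinj hsurj T
  | succ k ih =>
    intro T
    set V := Finset.univ.filter (fun x => a^[k+1] x ∈ T) with hV
    have hstep := card_step a h0 hinj hsurj V
    have hIH := ih T
    rw [← hV] at hIH
    have hfe : Finset.univ.filter (fun x : ZMod n => a^[k+1+1] x ∈ T)
        = Finset.univ.filter (fun x : ZMod n => a x ∈ V) := by
      ext x
      simp only [hV, mem_filter, mem_univ, true_and]
      rfl
    have h0V : ((0:ZMod n) ∈ V) ↔ (a^[k] (a 0) ∈ T) := by
      simp only [hV, mem_filter, mem_univ, true_and]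
      rfl
    have haV : (a 0 ∈ V) ↔ (a^[k+1] (a 0) ∈ T) := by
      simp only [hV, mem_filter, mem_univ, true_and]
    have e1 : (if (0:ZMod n) ∈ V then 1 else 0) = (if a^[k] (a 0) ∈ T then 1 else 0) := by
      simp only [h0V]
    have e2 : (if a 0 ∈ V then 1 else 0) = (if a^[k+1] (a 0) ∈ T then 1 else 0) := by
      simp only [haV]
    rw [hfe]
    rw [e1, e2] at hstep
    split_ifs at hstep hIH ⊢ <;> omega

end Aux

/-- Proposition: in a standardized DFA `⟨ℤₙ, {a, b}⟩` with orbit subgroup `H₀`, every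
non-empty subset that is not a union of `H₀`-cosets is `n`-expandable, by a word of
the form `a^(s+1) b^q` with `s + 1 + q ≤ n`. -/
theorem stmt7 (n : ℕ) (hn : 2 ≤ n) (a : ZMod n → ZMod n)
    (hexcl : Set.range a = {(0 : ZMod n)}ᶜ)
    (hdupl : ∀ p : ZMod n,
      (∃ q₁ q₂ : ZMod n, q₁ ≠ q₂ ∧ a q₁ = p ∧ a q₂ = p) ↔ p = a 0)
    (r : ZMod n) (hr : r ≠ 0) (hra : a r = a 0)
    (ℓ : ℕ) (hℓ1 : 1 ≤ ℓ) (hℓr : a^[ℓ - 1] (a 0) = r)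
    (hℓmin : ∀ m : ℕ, 1 ≤ m → a^[m - 1] (a 0) = r → ℓ ≤ m)
    (S : Finset (ZMod n)) (hS : S.Nonempty)
    -- `S` is not a union of cosets of the orbit subgroup `H₀`
    (hSnc : ¬ ∀ x ∈ S, ∀ y : ZMod n,
      y - x ∈ AddSubgroup.closure {x : ZMod n | ∃ s : ℕ, s < ℓ ∧ x = a^[s] (a 0)} →
        y ∈ S) :
    ∃ w : List Bool, w.length ≤ n ∧
      (∃ s q : ℕ, s < ℓ ∧ s + 1 + q ≤ n ∧
        w = List.replicate (s + 1) true ++ List.replicate q false) ∧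
      ∃ P : Finset (ZMod n), S.card < P.card ∧
        P.image (fun p => actAB n a p w) = S := by
  classical
  haveI : NeZero n := ⟨by omega⟩
  -- basic structure of `a`
  have h0 : ∀ x : ZMod n, a x ≠ 0 := by
    intro x
    have hx : a x ∈ ({(0:ZMod n)}ᶜ : Set (ZMod n)) := hexcl ▸ ⟨x, rfl⟩
    simpa using hx
  have hsurj0 : ∀ y : ZMod n, y ≠ 0 → ∃ x, a x = y := by
    intro y hy
    have : y ∈ Set.range a := by rw [hexcl]; simpa using hy
    exact this
  have hsurj : ∀ y : ZMod n, y ≠ 0 → ∃ x, x ≠ 0 ∧ a x = y := by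
    intro y hy
    obtain ⟨x, hx⟩ := hsurj0 y hy
    by_cases hx0 : x = 0
    · refine ⟨r, hr, ?_⟩
      rw [hra, ← hx, hx0]
    · exact ⟨x, hx0, hx⟩
  have hinj : ∀ x y : ZMod n, x ≠ 0 → y ≠ 0 → a x = a y → x = y := by
    have hsurj' : Function.Surjective
        (fun x : {x : ZMod n // x ≠ 0} => (⟨a x.1, h0 x.1⟩ : {x : ZMod n // x ≠ 0})) := by
      rintro ⟨y, hy⟩
      obtain ⟨x, hx0, hx⟩ := hsurj y hy
      exact ⟨⟨x, hx0⟩, Subtype.ext hx⟩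
    have hinj' := Finite.injective_iff_surjective.mpr hsurj'
    intro x y hx hy hxy
    have := hinj' (a₁ := ⟨x, hx⟩) (a₂ := ⟨y, hy⟩) (Subtype.ext hxy)
    exact congrArg Subtype.val this
  have hdner : ∀ t : ℕ, a^[t] (a 0) ≠ 0 := by
    intro t
    cases t with
    | zero => simpa using h0 0
    | succ t => rw [Function.iterate_succ_apply']; exact h0 _
  have hinj_it : ∀ (k : ℕ) (x y : ZMod n), x ≠ 0 → y ≠ 0 → a^[k] x = a^[k] y → x = y := by
    intro k
    induction k with
    | zero => intro x y _ _ h; simpa using h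
    | succ k ih =>
      intro x y hx hy h
      rw [Function.iterate_succ_apply, Function.iterate_succ_apply] at h
      exact hinj x y hx hy (ih (a x) (a y) (h0 x) (h0 y) h)
  have hsurj_it : ∀ (k : ℕ) (y : ZMod n), y ≠ 0 → ∃ x, x ≠ 0 ∧ a^[k] x = y := by
    intro k
    induction k with
    | zero => intro y hy; exact ⟨y, hy, rfl⟩
    | succ k ih =>
      intro y hy
      obtain ⟨x, hx0, hx⟩ := hsurj y hy
      obtain ⟨z, hz0, hz⟩ := ih x hx0
      exact ⟨z, hz0, by rw [Function.iterate_succ_apply', hz, hx]⟩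
  have hd_inj : ∀ i j : ℕ, i < j → j < ℓ → a^[i] (a 0) ≠ a^[j] (a 0) := by
    intro i j hij hj hEq
    have hm : a^[i] (a 0) = a^[i] (a^[j - i] (a 0)) := by
      rw [← Function.iterate_add_apply, Nat.add_sub_cancel' (le_of_lt hij)]
      exact hEq
    have h1 : a 0 = a^[j - i] (a 0) :=
      hinj_it i _ _ (h0 0) (hdner _) hm
    obtain ⟨m, hmm⟩ : ∃ m, j - i = m + 1 := ⟨j - i - 1, by omega⟩
    rw [hmm, Function.iterate_succ_apply'] at h1
    have h3 : a^[m] (a 0) = r := hinj _ _ (hdner m) hr (by rw [hra]; exact h1.symm)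
    have := hℓmin (m + 1) (by omega) (by simpa using h3)
    omega
  -- stabilizer subgroup of S
  let K : AddSubgroup (ZMod n) :=
    { carrier := {h : ZMod n | ∀ x : ZMod n, x + h ∈ S ↔ x ∈ S}
      zero_mem' := by intro x; simp
      add_mem' := by
        intro h1 h2 m1 m2 x
        rw [← add_assoc]
        exact (m2 (x + h1)).trans (m1 x)
      neg_mem' := by
        intro h m x
        have := (m (x + -h)).symm
        simpa using this }
  have KmemIff : ∀ h : ZMod n, h ∈ K ↔ ∀ x : ZMod n, x + h ∈ S ↔ x ∈ S := fun _ => Iff.rfl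
  -- there is a moving generator
  have hmoves : ∃ s : ℕ, s < ℓ ∧ ¬ (∀ x : ZMod n, x + a^[s] (a 0) ∈ S ↔ x ∈ S) := by
    by_contra hcon
    push_neg at hcon
    apply hSnc
    intro x hx y hy
    have hKle : AddSubgroup.closure {x : ZMod n | ∃ s : ℕ, s < ℓ ∧ x = a^[s] (a 0)} ≤ K := by
      rw [AddSubgroup.closure_le]
      rintro z ⟨t, ht, rfl⟩
      exact (KmemIff _).mpr (hcon t ht)
    have h2 := ((KmemIff _).mp (hKle hy) x).mpr hx
    have h3 : x + (y - x) = y := by ring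
    rwa [h3] at h2
  -- minimal moving index
  set s := Nat.find hmoves with hsdef
  have hs := Nat.find_spec hmoves
  have hsl : s < ℓ := hs.1
  have hsmin : ∀ t, t < s → ∀ x : ZMod n, x + a^[t] (a 0) ∈ S ↔ x ∈ S := by
    intro t ht
    have h := Nat.find_min hmoves ht
    push_neg at h
    exact h (lt_trans ht hsl)
  set ds := a^[s] (a 0) with hdsdef
  -- subgroup generated by the earlier orbit elements
  have hH'K : AddSubgroup.closure {x : ZMod n | ∃ t : ℕ, t < s ∧ x = a^[t] (a 0)} ≤ K := by
    rw [AddSubgroup.closure_le]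
    rintro z ⟨t, ht, rfl⟩
    exact (KmemIff _).mpr (hsmin t ht)
  set H' := AddSubgroup.closure {x : ZMod n | ∃ t : ℕ, t < s ∧ x = a^[t] (a 0)} with hH'def
  let Hf : Finset (ZMod n) := Finset.univ.filter (fun x => x ∈ H')
  have hcard1 : s + 1 ≤ Hf.card := by
    have hsub : insert (0 : ZMod n) ((Finset.range s).image (fun t => a^[t] (a 0))) ⊆ Hf := by
      intro z hz
      simp only [Finset.mem_insert, Finset.mem_image, Finset.mem_range] at hz
      simp only [Hf, Finset.mem_filter, Finset.mem_univ, true_and]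
      rcases hz with rfl | ⟨t, ht, rfl⟩
      · exact H'.zero_mem
      · exact AddSubgroup.subset_closure ⟨t, ht, rfl⟩
    have himg : ((Finset.range s).image (fun t => a^[t] (a 0))).card = s := by
      rw [Finset.card_image_of_injOn, Finset.card_range]
      intro i hi j hj hij
      simp only [Finset.coe_range, Set.mem_Iio] at hi hj
      by_contra hne
      rcases Nat.lt_or_ge i j with h | h
      · exact hd_inj i j h (lt_trans hj hsl) hij
      · exact hd_inj j i (by omega) (lt_trans hi hsl) hij.symm
    have h0notin : (0:ZMod n) ∉ (Finset.range s).image (fun t => a^[t] (a 0)) := by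
      simp only [Finset.mem_image, Finset.mem_range]
      rintro ⟨t, ht, h⟩
      exact hdner t h
    calc s + 1 = (insert (0:ZMod n) ((Finset.range s).image (fun t => a^[t] (a 0)))).card := by
          rw [Finset.card_insert_of_notMem h0notin, himg]
      _ ≤ Hf.card := Finset.card_le_card hsub
  -- a good q₀ exists
  have hQ : ∃ q : ZMod n, q ∉ S ∧ q + ds ∈ S := by
    have hmv := hs.2
    push_neg at hmv
    obtain ⟨x, hx⟩ := hmv
    rcases hx with ⟨hx1, hx2⟩ | ⟨hx1, hx2⟩
    · exact ⟨x, hx2, hx1⟩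
    · by_contra hcon
      push_neg at hcon
      have hsub : Sᶜ.image (fun y => y + ds) ⊆ Sᶜ := by
        intro z hz
        simp only [Finset.mem_image, Finset.mem_compl] at hz ⊢
        obtain ⟨y, hy, rfl⟩ := hz
        exact hcon y hy
      have hcardc : (Sᶜ.image (fun y => y + ds)).card = Sᶜ.card :=
        Finset.card_image_of_injective _ (add_left_injective ds)
      have heq : Sᶜ.image (fun y => y + ds) = Sᶜ :=
        Finset.eq_of_subset_of_card_le hsub (le_of_eq hcardc.symm)
      have hxc : x + ds ∈ Sᶜ.image (fun y => y + ds) := by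
        rw [heq, Finset.mem_compl]; exact hx1
      obtain ⟨y, hy, hyx⟩ := Finset.mem_image.mp hxc
      have hyxe : y = x := add_left_injective ds hyx
      rw [hyxe] at hy
      exact (Finset.mem_compl.mp hy) hx2
  obtain ⟨q0, hq0S, hq0d⟩ := hQ
  -- the coset q₀ + H' consists of good elements; take the one with minimal value
  let C : Finset (ZMod n) := Hf.image (fun h => q0 + h)
  have hCcard : C.card = Hf.card := Finset.card_image_of_injective _ (add_right_injective q0)
  have hCQ : ∀ z ∈ C, z ∉ S ∧ z + ds ∈ S := by
    intro z hz
    obtain ⟨h, hh, rfl⟩ := Finset.mem_image.mp hz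
    have hhH : h ∈ H' := by
      simpa [Hf, Finset.mem_filter] using hh
    have hK1 := (KmemIff h).mp (hH'K hhH)
    constructor
    · intro hcon; exact hq0S ((hK1 q0).mp hcon)
    · have harr : q0 + h + ds = (q0 + ds) + h := by ring
      rw [harr]
      exact (hK1 (q0 + ds)).mpr hq0d
  have hCne : C.Nonempty := by
    refine ⟨q0 + 0, Finset.mem_image.mpr ⟨0, ?_, rfl⟩⟩
    simp only [Hf, Finset.mem_filter, Finset.mem_univ, true_and]
    exact H'.zero_mem
  obtain ⟨q, hqC, hqmin⟩ := Finset.exists_min_image C (fun x => x.val) hCne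
  have hbound : C.card ≤ n - q.val := by
    have hsub : C ⊆ Finset.univ.filter (fun x : ZMod n => q.val ≤ x.val) := by
      intro z hz
      simp only [Finset.mem_filter, Finset.mem_univ, true_and]
      exact hqmin z hz
    have hcard : (Finset.univ.filter (fun x : ZMod n => q.val ≤ x.val)).card
        = (Finset.Ico q.val n).card := by
      apply Finset.card_bij (fun x _ => x.val)
      · intro x hx
        simp only [Finset.mem_filter, Finset.mem_univ, true_and] at hx
        exact Finset.mem_Ico.mpr ⟨hx, ZMod.val_lt x⟩
      · intro x _ y _ hxy
        exact ZMod.val_injective n hxy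
      · intro m hm
        rw [Finset.mem_Ico] at hm
        refine ⟨(m : ZMod n), ?_, ZMod.val_cast_of_lt hm.2⟩
        simp only [Finset.mem_filter, Finset.mem_univ, true_and]
        rw [ZMod.val_cast_of_lt hm.2]
        exact hm.1
    calc C.card ≤ (Finset.univ.filter (fun x : ZMod n => q.val ≤ x.val)).card :=
          Finset.card_le_card hsub
      _ = (Finset.Ico q.val n).card := hcard
      _ = n - q.val := Nat.card_Ico _ _
  have hqval : s + 1 + q.val ≤ n := by
    have h1 : s + 1 ≤ C.card := by omega
    have h2 : q.val < n := ZMod.val_lt q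
    omega
  obtain ⟨hqS, hqd⟩ := hCQ q hqC
  have hq_cast : ((q.val : ℕ) : ZMod n) = q := by
    rw [ZMod.natCast_val, ZMod.cast_id]
  -- assemble the witness word and preimage set
  refine ⟨List.replicate (s + 1) true ++ List.replicate q.val false, ?_,
    ⟨s, q.val, hsl, hqval, rfl⟩, ?_⟩
  · simp only [List.length_append, List.length_replicate]
    omega
  · -- translated target set
    set T : Finset (ZMod n) := S.image (fun y => y - q) with hTdef
    have hTmem : ∀ x : ZMod n, x ∈ T ↔ x + q ∈ S := by
      intro x
      simp only [hTdef, Finset.mem_image]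
      constructor
      · rintro ⟨y, hy, rfl⟩
        simpa [sub_add_cancel] using hy
      · intro h
        exact ⟨x + q, h, by ring⟩
    have hT0 : (0:ZMod n) ∉ T := by
      rw [hTmem]
      simpa using hqS
    have hTd : a^[s] (a 0) ∈ T := by
      rw [hTmem, ← hdsdef, add_comm]
      exact hqd
    have hTcard : T.card = S.card :=
      Finset.card_image_of_injective _ (fun x y h => by
        have := congrArg (fun z => z + q) h
        simpa using this)
    set P : Finset (ZMod n) := Finset.univ.filter (fun p => a^[s+1] p ∈ T) with hPdef
    have hPcard := card_iter a h0 hinj hsurj s T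
    rw [if_neg hT0, if_pos hTd, ← hPdef] at hPcard
    refine ⟨P, by omega, ?_⟩
    ext y
    simp only [Finset.mem_image]
    constructor
    · rintro ⟨p, hp, rfl⟩
      have hp' : a^[s+1] p ∈ T := by
        exact (Finset.mem_filter.mp hp).2
      rw [actAB_word, hq_cast]
      exact (hTmem _).mp hp'
    · intro hy
      have hy0 : y - q ≠ 0 := by
        intro hc
        have hyq : y = q := by
          have := congrArg (fun z => z + q) hc
          simpa using this
        rw [hyq] at hy
        exact hqS hy
      obtain ⟨x, hx0, hxe⟩ := hsurj_it (s + 1) (y - q) hy0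
      refine ⟨x, ?_, ?_⟩
      · simp only [hPdef, Finset.mem_filter, Finset.mem_univ, true_and]
        rw [hxe, hTmem]
        simpa [sub_add_cancel] using hy
      · rw [actAB_word, hq_cast, hxe]
        ring
end

section
/- Let A = ⟨ℤₙ, {a, b}⟩ be a standardized DFA whose orbit subgroup coincides with the whole group (ℤₙ, ⊕). Then A satisfies Don's conjecture: for every k with 0 < k ≤ n, every subset of ℤₙ with k states is reachable by a word of length at most n(n−k). -/
section Helpers
variable {n : ℕ} (a : ZMod n → ZMod n)

lemma actAB_append (q : ZMod n) (u v : List Bool) :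
    actAB n a q (u ++ v) = actAB n a (actAB n a q u) v :=
  List.foldl_append

lemma actAB_true (q : ZMod n) : actAB n a q [true] = a q := rfl

lemma actAB_false (q : ZMod n) : actAB n a q [false] = q + 1 := rfl

lemma imgW_append (X : Finset (ZMod n)) (u v : List Bool) :
    X.image (fun q => actAB n a q (u ++ v)) =
      (X.image (fun q => actAB n a q u)).image (fun q => actAB n a q v) := by
  rw [Finset.image_image]
  apply Finset.image_congr
  intro x _
  exact actAB_append a x u v

lemma imgW_repl_false (X : Finset (ZMod n)) (m : ℕ) :
    X.image (fun q => actAB n a q (List.replicate m false)) =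
      X.image (fun q => q + (m : ZMod n)) := by
  induction m with
  | zero => simp [actAB]
  | succ m ih =>
    rw [List.replicate_succ', imgW_append, ih, Finset.image_image]
    apply Finset.image_congr
    intro x _
    simp [actAB, add_assoc]

end Helpers

/-- Theorem 1: every standardized DFA `⟨ℤₙ, {a, b}⟩` whose orbit subgroup coincides
with the whole group `(ℤₙ, ⊕)` fulfills Don's conjecture: every subset with `k > 0`
states is reachable by a word of length at most `n(n - k)`. -/
theorem stmt8 (n : ℕ) [NeZero n] (hn : 2 ≤ n) (a : ZMod n → ZMod n)
    (hexcl : Set.range a = {(0 : ZMod n)}ᶜ)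
    (hdupl : ∀ p : ZMod n,
      (∃ q₁ q₂ : ZMod n, q₁ ≠ q₂ ∧ a q₁ = p ∧ a q₂ = p) ↔ p = a 0)
    (r : ZMod n) (hr : r ≠ 0) (hra : a r = a 0)
    (ℓ : ℕ) (hℓ1 : 1 ≤ ℓ) (hℓr : a^[ℓ - 1] (a 0) = r)
    (hℓmin : ∀ m : ℕ, 1 ≤ m → a^[m - 1] (a 0) = r → ℓ ≤ m)
    -- the orbit subgroup is the whole group
    (horb : AddSubgroup.closure {x : ZMod n | ∃ s : ℕ, s < ℓ ∧ x = a^[s] (a 0)} = ⊤) :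
    ∀ S : Finset (ZMod n), S.Nonempty →
      ∃ w : List Bool, w.length ≤ n * (n - S.card) ∧
        Finset.univ.image (fun q => actAB n a q w) = S := by
  classical
  have hcardZ : Fintype.card (ZMod n) = n := ZMod.card n
  set d : ZMod n := a 0 with hd
  -- basic facts about a
  have hax0 : ∀ x : ZMod n, a x ≠ 0 := by
    intro x h
    have hx : a x ∈ Set.range a := ⟨x, rfl⟩
    rw [hexcl] at hx
    exact hx h
  have hsurj : ∀ y : ZMod n, y ≠ 0 → ∃ x, a x = y := by
    intro y hy
    have : y ∈ Set.range a := by rw [hexcl]; exact hy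
    exact this
  have huniq : ∀ x y : ZMod n, a x = a y → x ≠ y → a x = d := by
    intro x y h hxy
    exact (hdupl (a x)).mp ⟨x, y, hxy, rfl, h.symm⟩
  obtain ⟨g, hg⟩ : ∃ g : ZMod n → ZMod n, ∀ y : ZMod n, y ≠ 0 → a (g y) = y :=
    ⟨Function.invFun a, fun y hy => Function.invFun_eq (hsurj y hy)⟩
  -- orbit facts
  have hDsucc : ∀ s : ℕ, a^[s + 1] d = a (a^[s] d) := by
    intro s; rw [Function.iterate_succ_apply']
  have hD0 : ∀ s : ℕ, a^[s] d ≠ 0 := by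
    intro s
    cases s with
    | zero => exact hax0 0
    | succ m => rw [hDsucc m]; exact hax0 _
  have hDinj : ∀ i j : ℕ, i < j → j < ℓ → a^[i] d ≠ a^[j] d := by
    intro i j hij hj h
    have key : a^[(i + ℓ - 1 - j) ] d = r := by
      have : a^[ℓ - 1 - j] (a^[i] d) = a^[ℓ - 1 - j] (a^[j] d) := by rw [h]
      rw [← Function.iterate_add_apply, ← Function.iterate_add_apply] at this
      have h2 : ℓ - 1 - j + j = ℓ - 1 := by omega
      have h1 : ℓ - 1 - j + i = i + ℓ - 1 - j := by omega
      rw [h1, h2, hℓr] at this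
      exact this
    have hm := hℓmin (i + ℓ - j) (by omega) (by
      have : i + ℓ - j - 1 = i + ℓ - 1 - j := by omega
      rw [this]; exact key)
    omega
  -- per-step backward lemmas
  have gain : ∀ X : Finset (ZMod n), (0 : ZMod n) ∉ X → d ∈ X →
      ∃ T : Finset (ZMod n), T.card = X.card + 1 ∧ T.image a = X := by
    intro X h0 hdX
    refine ⟨((X.erase d).image g) ∪ {0, r}, ?_, ?_⟩
    · have hdisj : Disjoint ((X.erase d).image g) ({0, r} : Finset (ZMod n)) := by
        rw [Finset.disjoint_left]
        intro x hx hx2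
        obtain ⟨y, hy, hgy⟩ := Finset.mem_image.mp hx
        have hy0 : y ≠ 0 := fun h => h0 (h ▸ (Finset.mem_of_mem_erase hy))
        have hay : a (g y) = y := hg y hy0
        simp only [Finset.mem_insert, Finset.mem_singleton] at hx2
        have hyd : y = d := by
          rcases hx2 with h1 | h1
          · rw [← hay, hgy, h1, hd]
          · rw [← hay, hgy, h1, hra]
        exact (Finset.notMem_erase d X) (hyd ▸ hy)
      rw [Finset.card_union_of_disjoint hdisj]
      have hinj : Set.InjOn g (X.erase d) := by
        intro y1 h1 y2 h2 he
        have hy1 : y1 ≠ 0 := fun h => h0 (h ▸ (Finset.mem_of_mem_erase h1))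
        have hy2 : y2 ≠ 0 := fun h => h0 (h ▸ (Finset.mem_of_mem_erase h2))
        rw [← hg y1 hy1, ← hg y2 hy2, he]
      rw [Finset.card_image_of_injOn hinj, Finset.card_erase_of_mem hdX]
      have h2 : ({0, r} : Finset (ZMod n)).card = 2 := by
        rw [Finset.card_insert_of_notMem (by simpa using (Ne.symm hr)), Finset.card_singleton]
      rw [h2]
      have : 1 ≤ X.card := Finset.card_pos.mpr ⟨d, hdX⟩
      omega
    · rw [Finset.image_union, Finset.image_image]
      have h1 : (X.erase d).image (a ∘ g) = X.erase d := by
        rw [Finset.image_congr (g := id) ?_, Finset.image_id]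
        intro y hy
        rw [Finset.mem_coe] at hy
        have hy0 : y ≠ 0 := fun h => h0 (h ▸ (Finset.mem_of_mem_erase hy))
        exact hg y hy0
      have h2 : ({0, r} : Finset (ZMod n)).image a = {d} := by
        rw [Finset.image_insert, Finset.image_singleton, hra, ← hd]
        simp
      rw [h1, h2, Finset.union_comm, ← Finset.insert_eq, Finset.insert_erase hdX]
  have nogain : ∀ X : Finset (ZMod n), (0 : ZMod n) ∉ X → d ∉ X →
      ((0 : ZMod n) ∉ X.image g ∧ (X.image g).card = X.card ∧ (X.image g).image a = X ∧
        ∀ m : ℕ, a^[m + 1] d ∈ X → a^[m] d ∈ X.image g) := by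
    intro X h0 hdX
    have hmemne : ∀ y ∈ X, y ≠ 0 := fun y hy h => h0 (h ▸ hy)
    refine ⟨?_, ?_, ?_, ?_⟩
    · intro hmem
      obtain ⟨y, hy, hgy⟩ := Finset.mem_image.mp hmem
      have : a (g y) = y := hg y (hmemne y hy)
      rw [hgy] at this
      apply hdX
      rw [hd, this]
      exact hy
    · apply Finset.card_image_of_injOn
      intro y1 h1 y2 h2 he
      rw [← hg y1 (hmemne y1 h1), ← hg y2 (hmemne y2 h2), he]
    · rw [Finset.image_image]
      rw [Finset.image_congr (g := id) ?_, Finset.image_id]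
      intro y hy
      exact hg y (hmemne y hy)
    · intro m hm
      have hy0 : a^[m + 1] d ≠ 0 := hD0 (m + 1)
      have key : g (a^[m + 1] d) = a^[m] d := by
        by_contra hne
        have h1 : a (g (a^[m + 1] d)) = a (a^[m] d) := by
          rw [hg _ hy0, hDsucc]
        have := huniq _ _ h1 hne
        rw [hg _ hy0] at this
        exact hdX (this ▸ hm)
      exact key ▸ Finset.mem_image_of_mem g hm
  -- the chain lemma
  have chain : ∀ m : ℕ, ∀ X : Finset (ZMod n), (0 : ZMod n) ∉ X → a^[m] d ∈ X →
      ∃ (j : ℕ) (T : Finset (ZMod n)), j ≤ m ∧ T.card = X.card + 1 ∧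
        T.image (fun q => actAB n a q (List.replicate (j + 1) true)) = X := by
    intro m
    induction m with
    | zero =>
      intro X h0 hdX
      obtain ⟨T, hc, him⟩ := gain X h0 hdX
      exact ⟨0, T, le_refl 0, hc, by simpa [actAB] using him⟩
    | succ m ih =>
      intro X h0 hdm
      by_cases hdX : d ∈ X
      · obtain ⟨T, hc, him⟩ := gain X h0 hdX
        exact ⟨0, T, Nat.zero_le _, hc, by simpa [actAB] using him⟩
      · obtain ⟨h0', hc', him', hmem'⟩ := nogain X h0 hdX
        obtain ⟨j, T, hj, hTc, hTim⟩ := ih (X.image g) h0' (hmem' m hdm)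
        refine ⟨j + 1, T, by omega, by rw [hTc, hc'], ?_⟩
        rw [List.replicate_succ', imgW_append, hTim]
        have : (X.image g).image (fun q => actAB n a q [true]) = (X.image g).image a := rfl
        rw [this, him']
  -- the expansion lemma
  have expand : ∀ S : Finset (ZMod n), S.Nonempty → S.card < n →
      ∃ (T : Finset (ZMod n)) (v : List Bool), v.length ≤ n ∧ T.card = S.card + 1 ∧
        T.image (fun q => actAB n a q v) = S := by
    intro S hS hSlt
    -- stabilizer subgroup of S
    have hstab_neg : ∀ v : ZMod n, (∀ x ∈ S, x + v ∈ S) → ∀ x ∈ S, x + (-v) ∈ S := by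
      intro v hv x hx
      have hsub : S.image (fun y => y + v) ⊆ S := by
        intro z hz
        obtain ⟨y, hy, hyz⟩ := Finset.mem_image.mp hz
        exact hyz ▸ hv y hy
      have hcard : (S.image (fun y => y + v)).card = S.card :=
        Finset.card_image_of_injective _ (add_left_injective v)
      have heq : S.image (fun y => y + v) = S :=
        Finset.eq_of_subset_of_card_le hsub (le_of_eq hcard.symm)
      have : x ∈ S.image (fun y => y + v) := by rw [heq]; exact hx
      obtain ⟨y, hy, hyx⟩ := Finset.mem_image.mp this
      have : y = x + -v := by rw [← hyx]; ring
      rwa [this] at hy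
    set Stab : AddSubgroup (ZMod n) :=
      { carrier := {v : ZMod n | ∀ x ∈ S, x + v ∈ S}
        zero_mem' := by intro x hx; simpa using hx
        add_mem' := by
          intro u v hu hv x hx
          rw [← add_assoc]
          exact hv _ (hu x hx)
        neg_mem' := by
          intro v hv
          exact hstab_neg v hv } with hStab
    have hStab_mem : ∀ v : ZMod n, v ∈ Stab ↔ ∀ x ∈ S, x + v ∈ S := fun v => Iff.rfl
    -- existence of a non-invariant orbit element
    have hex : ∃ s : ℕ, s < ℓ ∧ ¬(∀ x ∈ S, x + a^[s] d ∈ S) := by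
      by_contra hcon
      push_neg at hcon
      have hsub : {x : ZMod n | ∃ s : ℕ, s < ℓ ∧ x = a^[s] (a 0)} ⊆ (Stab : Set (ZMod n)) := by
        rintro x ⟨s, hs, rfl⟩
        exact hcon s hs
      have hle := (AddSubgroup.closure_le Stab).mpr hsub
      rw [horb] at hle
      obtain ⟨x₀, hx₀⟩ := hS
      have hall : ∀ y : ZMod n, y ∈ S := by
        intro y
        have : (y - x₀) ∈ Stab := hle (AddSubgroup.mem_top _)
        have := this x₀ hx₀
        simpa using this
      have : S = Finset.univ := Finset.eq_univ_iff_forall.mpr hall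
      rw [this, Finset.card_univ, hcardZ] at hSlt
      omega
    set t := Nat.find hex with ht
    obtain ⟨htℓ, htni⟩ := Nat.find_spec hex
    have hmint : ∀ s : ℕ, s < t → (∀ x ∈ S, x + a^[s] d ∈ S) := by
      intro s hs
      have := Nat.find_min hex hs
      push_neg at this
      exact this (lt_trans hs htℓ)
    -- the set C of good shifts
    set C : Finset (ZMod n) := Finset.univ.filter (fun c => c ∉ S ∧ c + a^[t] d ∈ S) with hC
    have hCmem : ∀ c : ZMod n, c ∈ C ↔ (c ∉ S ∧ c + a^[t] d ∈ S) := by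
      intro c; simp [hC]
    have hCne : C.Nonempty := by
      by_contra hcon
      apply htni
      intro x hx
      by_contra hxni
      -- then complement is invariant under + a^[t] d
      have hcompl : ∀ c : ZMod n, c ∉ S → c + a^[t] d ∉ S := by
        intro c hc hcd
        exact hcon ⟨c, (hCmem c).mpr ⟨hc, hcd⟩⟩
      -- complement image
      have hsub : Sᶜ.image (fun y => y + a^[t] d) ⊆ Sᶜ := by
        intro z hz
        obtain ⟨y, hy, hyz⟩ := Finset.mem_image.mp hz
        rw [Finset.mem_compl] at hy ⊢
        exact hyz ▸ hcompl y hy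
      have hcard : (Sᶜ.image (fun y => y + a^[t] d)).card = Sᶜ.card :=
        Finset.card_image_of_injective _ (add_left_injective _)
      have heq : Sᶜ.image (fun y => y + a^[t] d) = Sᶜ :=
        Finset.eq_of_subset_of_card_le hsub (le_of_eq hcard.symm)
      have hmem : x + a^[t] d ∈ Sᶜ := Finset.mem_compl.mpr hxni
      rw [← heq] at hmem
      obtain ⟨y, hy, hyx⟩ := Finset.mem_image.mp hmem
      have : y = x := by
        have := add_left_injective (a^[t] d) hyx
        exact this
      rw [this] at hy
      exact (Finset.mem_compl.mp hy) hx
    obtain ⟨c, hcC, hcmin⟩ := C.exists_min_image ZMod.val hCne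
    obtain ⟨hcS, hcdS⟩ := (hCmem c).mp hcC
    -- C is invariant under Stab
    have hCstab : ∀ v ∈ Stab, ∀ x ∈ C, x + v ∈ C := by
      intro v hv x hx
      obtain ⟨hxS, hxd⟩ := (hCmem x).mp hx
      refine (hCmem _).mpr ⟨?_, ?_⟩
      · intro hmem
        have hnv : -v ∈ Stab := neg_mem hv
        have := hnv _ hmem
        simp only [add_neg_cancel_right] at this
        exact hxS this
      · have : x + a^[t] d + v ∈ S := hv _ hxd
        have he : x + v + a^[t] d = x + a^[t] d + v := by ring
        rw [he]
        exact this
    -- the subgroup generated by the earlier orbit elements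
    set K : AddSubgroup (ZMod n) := AddSubgroup.closure {x : ZMod n | ∃ s : ℕ, s < t ∧ x = a^[s] d} with hK
    have hKle : K ≤ Stab := by
      apply (AddSubgroup.closure_le Stab).mpr
      rintro x ⟨s, hs, rfl⟩
      exact hmint s hs
    set K' : Finset (ZMod n) := Finset.univ.filter (· ∈ K) with hK'
    have hK'low : t + 1 ≤ K'.card := by
      have hsub : insert (0 : ZMod n) ((Finset.range t).image (fun s => a^[s] d)) ⊆ K' := by
        intro x hx
        rw [Finset.mem_insert] at hx
        simp only [hK', Finset.mem_filter, Finset.mem_univ, true_and]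
        rcases hx with rfl | hx
        · exact zero_mem K
        · obtain ⟨s, hs, rfl⟩ := Finset.mem_image.mp hx
          exact AddSubgroup.subset_closure ⟨s, Finset.mem_range.mp hs, rfl⟩
      have hnotmem : (0 : ZMod n) ∉ (Finset.range t).image (fun s => a^[s] d) := by
        intro hmem
        obtain ⟨s, _, hs⟩ := Finset.mem_image.mp hmem
        exact hD0 s hs
      have hinjD : Set.InjOn (fun s => a^[s] d) (Finset.range t) := by
        intro i hi j hj hij
        rw [Finset.mem_coe, Finset.mem_range] at hi hj
        by_contra hne
        rcases Nat.lt_or_ge i j with h | h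
        · exact hDinj i j h (lt_trans hj htℓ) hij
        · have hji : j < i := lt_of_le_of_ne h (Ne.symm hne)
          exact hDinj j i hji (lt_trans hi htℓ) hij.symm
      have hcard : (insert (0 : ZMod n) ((Finset.range t).image (fun s => a^[s] d))).card = t + 1 := by
        rw [Finset.card_insert_of_notMem hnotmem, Finset.card_image_of_injOn hinjD, Finset.card_range]
      calc t + 1 = _ := hcard.symm
        _ ≤ K'.card := Finset.card_le_card hsub
      -- done
    have hK'high : K'.card ≤ n - c.val := by
      have hmap : K'.image (fun k => (c + k).val) ⊆ Finset.Ico c.val n := by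
        intro m hm
        obtain ⟨k, hk, hkm⟩ := Finset.mem_image.mp hm
        simp only [hK', Finset.mem_filter, Finset.mem_univ, true_and] at hk
        have hck : c + k ∈ C := hCstab k (hKle hk) c hcC
        have h1 : c.val ≤ (c + k).val := hcmin _ hck
        have h2 : (c + k).val < n := ZMod.val_lt _
        rw [Finset.mem_Ico, ← hkm]
        exact ⟨h1, h2⟩
      have hinj : Set.InjOn (fun k => (c + k).val) K' := by
        intro k1 _ k2 _ he
        have : (c + k1) = (c + k2) := ZMod.val_injective n he
        exact add_left_cancel this
      calc K'.card = (K'.image (fun k => (c + k).val)).card :=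
            (Finset.card_image_of_injOn hinj).symm
        _ ≤ (Finset.Ico c.val n).card := Finset.card_le_card hmap
        _ = n - c.val := Nat.card_Ico _ _
    have hbound : c.val + t + 1 ≤ n := by
      have := ZMod.val_lt c (n := n)
      omega
    -- build the initial set
    set X₀ : Finset (ZMod n) := S.image (fun x => x - c) with hX₀
    have h0X : (0 : ZMod n) ∉ X₀ := by
      intro hmem
      obtain ⟨y, hy, hyx⟩ := Finset.mem_image.mp hmem
      have : y = c := by
        have : y - c = 0 := hyx
        linear_combination this
      exact hcS (this ▸ hy)
    have hdtX : a^[t] d ∈ X₀ := by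
      apply Finset.mem_image.mpr
      exact ⟨c + a^[t] d, hcdS, by ring⟩
    have hcardX : X₀.card = S.card :=
      Finset.card_image_of_injective _ (sub_left_injective)
    obtain ⟨j, T, hj, hTc, hTim⟩ := chain t X₀ h0X hdtX
    refine ⟨T, List.replicate (j + 1) true ++ List.replicate c.val false, ?_, ?_, ?_⟩
    · rw [List.length_append, List.length_replicate, List.length_replicate]
      omega
    · rw [hTc, hcardX]
    · rw [imgW_append, hTim, imgW_repl_false]
      rw [hX₀, Finset.image_image]
      have : ((fun q => q + (c.val : ZMod n)) ∘ fun x => x - c) = id := by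
        funext x
        simp only [Function.comp_apply, id_eq]
        rw [ZMod.natCast_val, ZMod.cast_id]
        ring
      rw [this, Finset.image_id]
  -- main downward induction
  have main : ∀ m : ℕ, ∀ S : Finset (ZMod n), S.Nonempty → n - S.card ≤ m →
      ∃ w : List Bool, w.length ≤ n * (n - S.card) ∧
        Finset.univ.image (fun q => actAB n a q w) = S := by
    intro m
    induction m with
    | zero =>
      intro S hS hle
      have hcardle : S.card ≤ n := by
        have := Finset.card_le_univ S
        rwa [hcardZ] at this
      have hcard : S.card = n := by omega
      have hSuniv : S = Finset.univ := by
        apply Finset.eq_univ_of_card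
        rw [hcard, hcardZ]
      refine ⟨[], by simp, ?_⟩
      rw [hSuniv]
      simp [actAB]
    | succ m ih =>
      intro S hS hle
      have hcardle : S.card ≤ n := by
        have := Finset.card_le_univ S
        rwa [hcardZ] at this
      by_cases hcard : S.card = n
      · have hSuniv : S = Finset.univ := by
          apply Finset.eq_univ_of_card
          rw [hcard, hcardZ]
        refine ⟨[], by simp, ?_⟩
        rw [hSuniv]
        simp [actAB]
      · have hlt : S.card < n := lt_of_le_of_ne hcardle hcard
        obtain ⟨T, v, hv, hTc, hTim⟩ := expand S hS hlt
        have hTne : T.Nonempty := Finset.card_pos.mp (by omega)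
        obtain ⟨u, hu, huim⟩ := ih T hTne (by omega)
        refine ⟨u ++ v, ?_, ?_⟩
        · rw [List.length_append]
          have h1 : n - T.card = n - S.card - 1 := by omega
          have h2 : 1 ≤ n - S.card := by omega
          calc u.length + v.length ≤ n * (n - T.card) + n := by omega
            _ = n * (n - S.card - 1) + n := by rw [h1]
            _ = n * (n - S.card - 1 + 1) := by ring
            _ = n * (n - S.card) := by rw [Nat.sub_add_cancel h2]
        · rw [imgW_append, huim, hTim]
  intro S hS
  exact main (n - S.card) S hS (le_refl _)
end

section
/- Consider the DFA A = ⟨ℤ₆, {a, b}⟩ where b acts as q ↦ q ⊕ 1 mod 6 and a acts by: 0·a = 3, 1·a = 2, 2·a = 1, and q·a = q for q ∈ {3, 4, 5}. Then A is synchronizing — the word a b⁴ a b (a b²)² a b a maps ℤ₆ to a singleton — but A is not completely reachable: the subset {0, 1, 3, 4} is not equal to ℤ₆·w for any word w. -/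
/-- The letter `a` of the 6-state DFA of Figure 7. -/
def aF : ZMod 6 → ZMod 6 := fun q =>
  if q = 0 then 3 else if q = 1 then 2 else if q = 2 then 1 else q

/-- The action of a word on a state: `true` is the letter `a`, `false` is the letter
`b : q ↦ q + 1`. -/
def actF (q : ZMod 6) (w : List Bool) : ZMod 6 :=
  w.foldl (fun p l => if l then aF p else p + 1) q

/-- The word `a b⁴ a b (a b²)² a b a`. -/
def wF : List Bool :=
  [true] ++ List.replicate 4 false ++ [true, false] ++
    ([true, false, false] ++ [true, false, false]) ++ [true, false, true]

/-- The family of all reachable subsets. -/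
def famF : List (Finset (ZMod 6)) :=
  [{0}, {1}, {2}, {3}, {4}, {5}, {0,1}, {0,2}, {0,3}, {0,4}, {0,5}, {1,2}, {1,3}, {1,4}, {1,5}, {2,3}, {2,4}, {2,5}, {3,4}, {3,5}, {4,5}, {0,1,2}, {0,1,3}, {0,1,4}, {0,1,5}, {0,2,3}, {0,2,4}, {0,2,5}, {0,3,4}, {0,3,5}, {0,4,5}, {1,2,3}, {1,2,4}, {1,2,5}, {1,3,4}, {1,3,5}, {1,4,5}, {2,3,4}, {2,3,5}, {2,4,5}, {3,4,5}, {0,1,2,3}, {0,1,2,4}, {0,1,2,5}, {0,1,3,5}, {0,1,4,5}, {0,2,3,4}, {0,2,4,5}, {0,3,4,5}, {1,2,3,4}, {1,2,3,5}, {1,3,4,5}, {2,3,4,5}, {0,1,2,3,4}, {0,1,2,3,5}, {0,1,2,4,5}, {0,1,3,4,5}, {0,2,3,4,5}, {1,2,3,4,5}, {0,1,2,3,4,5}]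

lemma actF_append (q : ZMod 6) (w : List Bool) (l : Bool) :
    actF q (w ++ [l]) = (fun p => if l then aF p else p + 1) (actF q w) := by
  simp [actF, List.foldl_append]

lemma image_append (w : List Bool) (l : Bool) :
    Finset.univ.image (fun q => actF q (w ++ [l])) =
      (Finset.univ.image (fun q => actF q w)).image
        (fun p => if l then aF p else p + 1) := by
  rw [Finset.image_image]
  exact Finset.image_congr (fun q _ => actF_append q w l)

lemma mem_famF (w : List Bool) :
    Finset.univ.image (fun q => actF q w) ∈ famF := by
  induction w using List.reverseRecOn with
  | nil =>
      have : Finset.univ.image (fun q : ZMod 6 => actF q []) = Finset.univ := by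
        simp [actF]
      rw [this]; decide
  | append_singleton w l ih =>
      rw [image_append]
      revert ih
      have h : ∀ S ∈ famF, ∀ l : Bool,
          S.image (fun p => if l then aF p else p + 1) ∈ famF := by decide
      exact fun ih => h _ ih l

/-- The 6-state standardized DFA of Figure 7 is synchronizing — the word
`a b⁴ a b (a b²)² a b a` is a reset word — but not completely reachable:
the subset `{0, 1, 3, 4}` is not reachable by any word. -/
theorem stmt19 :
    (∃ q₀ : ZMod 6, Finset.univ.image (fun q => actF q wF) = {q₀}) ∧
    ¬ ∃ w : List Bool, Finset.univ.image (fun q => actF q w) =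
        ({0, 1, 3, 4} : Finset (ZMod 6)) := by
  constructor
  · exact ⟨3, by decide⟩
  · rintro ⟨w, hw⟩
    have h := mem_famF w
    rw [hw] at h
    revert h
    decide
end
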